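/- Let (X_i) be IID with E[X⁺] < ∞ and N a positive-integer-valued random variable independent of (X_i). For 0 < s ≤ 1, E[((S_N)⁺)^s] ≤ (E[X⁺])^s · E[N^s], where S_N = X_1 + ⋯ + X_N. -/

import Mathlib

open MeasureTheory ProbabilityTheory Real Filter

lemma jensen_rpow {Ω : Type*} [MeasurableSpace Ω] (μ : Measure Ω) [IsProbabilityMeasure μ]
    {f : Ω → ENNReal} (hf : AEMeasurable f μ) {s : ℝ} (hs0 : 0 < s) (hs1 : s ≤ 1) :
    ∫⁻ ω, f ω ^ s ∂μ ≤ (∫⁻ ω, f ω ∂μ) ^ s := by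
  have h := ENNReal.lintegral_mul_norm_pow_le (μ := μ) (g := fun _ => 1) hf aemeasurable_const
    hs0.le (by linarith : (0:ℝ) ≤ 1 - s) (by ring)
  simpa using h

/-- For an independently stopped random walk with IID increments, `0 < s ≤ 1`
and `E[X⁺] < ∞`, one has `E[((S_N)⁺)^s] ≤ (E[X⁺])^s · E[N^s]` (Jensen). -/
theorem stopped_sum_moment_bound_jensen
    {Ω : Type*} [MeasurableSpace Ω] (μ : Measure Ω) [IsProbabilityMeasure μ]
    (X : ℕ → Ω → ℝ) (hXmeas : ∀ i, Measurable (X i))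
    (hXindep : iIndepFun X μ)
    (hXident : ∀ i, IdentDistrib (X i) (X 0) μ μ)
    (N : Ω → ℕ) (hNmeas : Measurable N) (hNpos : ∀ ω, 1 ≤ N ω)
    (hNindep : IndepFun (fun ω i => X i ω) N μ)
    (s : ℝ) (hs0 : 0 < s) (hs1 : s ≤ 1)
    (hXint : Integrable (fun ω => max (X 0 ω) 0) μ) :
    ∫⁻ ω, ENNReal.ofReal ((max (∑ k ∈ Finset.range (N ω), X k ω) 0) ^ s) ∂μ
      ≤ ENNReal.ofReal ((∫ ω, max (X 0 ω) 0 ∂μ) ^ s)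
        * ∫⁻ ω, ENNReal.ofReal ((N ω : ℝ) ^ s) ∂μ := by
  classical
  set E0 : ℝ := ∫ ω, max (X 0 ω) 0 ∂μ with hE0
  have hE0nn : 0 ≤ E0 := integral_nonneg fun ω => le_max_right _ _
  -- the nonneg parts
  set T : ℕ → Ω → ℝ := fun n ω => ∑ k ∈ Finset.range n, max (X k ω) 0 with hT
  have hTnn : ∀ n ω, 0 ≤ T n ω := fun n ω => Finset.sum_nonneg fun k _ => le_max_right _ _
  have hTmeas : ∀ n, Measurable (T n) := fun n =>
    Finset.measurable_sum _ fun k _ => (hXmeas k).max measurable_const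
  -- G n : function of the path
  set G : ℕ → (ℕ → ℝ) → ENNReal := fun n x =>
    (ENNReal.ofReal (∑ k ∈ Finset.range n, max (x k) 0)) ^ s with hG
  have hGmeas : ∀ n, Measurable (G n) := fun n =>
    ((ENNReal.measurable_ofReal.comp
      (Finset.measurable_sum _ fun k _ => (measurable_pi_apply k).max measurable_const))).pow_const s
  have hXvec : Measurable (fun ω i => X i ω) := measurable_pi_lambda _ fun i => hXmeas i
  -- partition lemma
  have hpart : ∀ (f : Ω → ENNReal), Measurable f →
      ∫⁻ ω, f ω ∂μ = ∑' n : ℕ, ∫⁻ ω in {ω | N ω = n}, f ω ∂μ := by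
    intro f hf
    have hsets : ∀ n : ℕ, MeasurableSet {ω | N ω = n} := fun n => hNmeas (measurableSet_singleton n)
    have hdisj : Pairwise (Function.onFun Disjoint fun n => {ω | N ω = n}) := by
      intro m n hmn
      simp only [Function.onFun, Set.disjoint_left]
      intro ω h1 h2; exact hmn (h1.symm.trans h2)
    have hunion : (⋃ n : ℕ, {ω | N ω = n}) = Set.univ := by
      ext ω; simp
    rw [← lintegral_iUnion hsets hdisj f, hunion, Measure.restrict_univ]
  -- lintegral of T n
  have hTlint : ∀ n, ∫⁻ ω, ENNReal.ofReal (T n ω) ∂μ = n * ENNReal.ofReal E0 := by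
    intro n
    have : ∀ ω, ENNReal.ofReal (T n ω)
        = ∑ k ∈ Finset.range n, ENNReal.ofReal (max (X k ω) 0) := by
      intro ω
      exact ENNReal.ofReal_sum_of_nonneg fun k _ => le_max_right _ _
    simp_rw [this]
    rw [lintegral_finset_sum _ fun k _ =>
      Measurable.ennreal_ofReal ((hXmeas k).max measurable_const)]
    have hk : ∀ k, ∫⁻ ω, ENNReal.ofReal (max (X k ω) 0) ∂μ = ENNReal.ofReal E0 := by
      intro k
      have hid : IdentDistrib (fun ω => ENNReal.ofReal (max (X k ω) 0))
          (fun ω => ENNReal.ofReal (max (X 0 ω) 0)) μ μ :=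
        (hXident k).comp (ENNReal.measurable_ofReal.comp (measurable_id.max measurable_const))
      rw [hid.lintegral_eq, ← ofReal_integral_eq_lintegral_ofReal hXint
        (Filter.Eventually.of_forall fun ω => le_max_right _ _)]
    rw [Finset.sum_congr rfl fun k _ => hk k]; simp
  -- Jensen applied
  have hJensen : ∀ n : ℕ, ∫⁻ ω, (ENNReal.ofReal (T n ω)) ^ s ∂μ
      ≤ (n : ENNReal) ^ s * ENNReal.ofReal E0 ^ s := by
    intro n
    calc ∫⁻ ω, (ENNReal.ofReal (T n ω)) ^ s ∂μ
        ≤ (∫⁻ ω, ENNReal.ofReal (T n ω) ∂μ) ^ s :=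
          jensen_rpow μ ((ENNReal.measurable_ofReal.comp (hTmeas n)).aemeasurable) hs0 hs1
      _ = (n * ENNReal.ofReal E0) ^ s := by rw [hTlint n]
      _ = (n : ENNReal) ^ s * ENNReal.ofReal E0 ^ s :=
          ENNReal.mul_rpow_of_nonneg _ _ hs0.le
  -- independence step
  have hindep : ∀ n : ℕ, ∫⁻ ω in {ω | N ω = n}, G n (fun i => X i ω) ∂μ
      = μ {ω | N ω = n} * ∫⁻ ω, G n (fun i => X i ω) ∂μ := by
    intro n
    set H : Ω → ENNReal := fun ω => Set.indicator ({n} : Set ℕ) (fun _ => 1) (N ω) with hH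
    have hHmeas : Measurable H := (measurable_from_nat (f := fun m =>
      Set.indicator ({n} : Set ℕ) (fun _ => (1:ENNReal)) m)).comp hNmeas
    have hind : IndepFun (fun ω => G n (fun i => X i ω)) H μ := by
      exact hNindep.comp (hGmeas n) (measurable_from_nat
        (f := fun m => Set.indicator ({n} : Set ℕ) (fun _ => (1:ENNReal)) m))
    have heq : ∀ ω, Set.indicator {ω | N ω = n} (fun ω => G n (fun i => X i ω)) ω
        = (fun ω => G n (fun i => X i ω)) ω * H ω := by
      intro ω
      by_cases h : N ω = n <;> simp [hH, Set.indicator, h]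
    have hsets : MeasurableSet {ω | N ω = n} := hNmeas (measurableSet_singleton n)
    rw [← lintegral_indicator hsets]
    simp_rw [heq]
    have hmul := lintegral_mul_eq_lintegral_mul_lintegral_of_indepFun
      (show Measurable fun ω => G n fun i => X i ω from (hGmeas n).comp hXvec) hHmeas hind
    simp only [Pi.mul_apply] at hmul
    rw [hmul]
    have : ∫⁻ ω, H ω ∂μ = μ {ω | N ω = n} := by
      have : H = Set.indicator {ω | N ω = n} (fun _ => 1) := by
        ext ω; by_cases h : N ω = n <;> simp [hH, Set.indicator, h]
      rw [this, lintegral_indicator hsets]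
      simp
    rw [this, mul_comm]
  -- LHS pointwise bound
  have hpt : ∀ ω, ENNReal.ofReal ((max (∑ k ∈ Finset.range (N ω), X k ω) 0) ^ s)
      ≤ G (N ω) (fun i => X i ω) := by
    intro ω
    rw [hG]
    dsimp only
    rw [← ENNReal.ofReal_rpow_of_nonneg (le_max_right _ _) hs0.le]
    refine ENNReal.rpow_le_rpow (ENNReal.ofReal_le_ofReal ?_) hs0.le
    exact max_le (Finset.sum_le_sum fun k _ => le_max_left _ _)
      (Finset.sum_nonneg fun k _ => le_max_right _ _)
  -- measurability of ω ↦ G (N ω) (X · ω)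
  have hGNmeas : Measurable (fun ω => G (N ω) (fun i => X i ω)) := by
    have : Measurable (fun p : (ℕ → ℝ) × ℕ => G p.2 p.1) :=
      measurable_from_prod_countable_left fun n => hGmeas n
    exact this.comp (hXvec.prodMk hNmeas)
  calc ∫⁻ ω, ENNReal.ofReal ((max (∑ k ∈ Finset.range (N ω), X k ω) 0) ^ s) ∂μ
      ≤ ∫⁻ ω, G (N ω) (fun i => X i ω) ∂μ := lintegral_mono hpt
    _ = ∑' n : ℕ, ∫⁻ ω in {ω | N ω = n}, G (N ω) (fun i => X i ω) ∂μ := hpart _ hGNmeas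
    _ = ∑' n : ℕ, ∫⁻ ω in {ω | N ω = n}, G n (fun i => X i ω) ∂μ := by
        refine tsum_congr fun n => ?_
        refine setLIntegral_congr_fun (hNmeas (measurableSet_singleton n))
          (fun ω hω => ?_)
        simp only [Set.mem_setOf_eq] at hω
        rw [hω]
    _ = ∑' n : ℕ, μ {ω | N ω = n} * ∫⁻ ω, G n (fun i => X i ω) ∂μ :=
        tsum_congr fun n => hindep n
    _ ≤ ∑' n : ℕ, μ {ω | N ω = n} * ((n : ENNReal) ^ s * ENNReal.ofReal E0 ^ s) := by
        refine ENNReal.tsum_le_tsum fun n => mul_le_mul_right ?_ _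
        simpa [hG, hT] using hJensen n
    _ = ENNReal.ofReal (E0 ^ s) * ∑' n : ℕ, μ {ω | N ω = n} * ENNReal.ofReal ((n : ℝ) ^ s) := by
        rw [← ENNReal.tsum_mul_left]
        refine tsum_congr fun n => ?_
        rw [← ENNReal.ofReal_rpow_of_nonneg hE0nn hs0.le,
          ← ENNReal.ofReal_rpow_of_nonneg (by positivity : (0:ℝ) ≤ (n:ℝ)) hs0.le]
        simp only [ENNReal.ofReal_natCast]
        ring
    _ = ENNReal.ofReal (E0 ^ s) * ∫⁻ ω, ENNReal.ofReal ((N ω : ℝ) ^ s) ∂μ := by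
        congr 1
        rw [hpart (fun ω => ENNReal.ofReal ((N ω : ℝ) ^ s))
          ((measurable_from_nat (f := fun m => ENNReal.ofReal ((m : ℝ) ^ s))).comp hNmeas)]
        refine (tsum_congr fun n => ?_).symm
        have hs' : MeasurableSet {ω | N ω = n} := hNmeas (measurableSet_singleton n)
        calc ∫⁻ ω in {ω | N ω = n}, ENNReal.ofReal ((N ω : ℝ) ^ s) ∂μ
            = ∫⁻ _ω in {ω | N ω = n}, ENNReal.ofReal ((n : ℝ) ^ s) ∂μ :=
              setLIntegral_congr_fun hs' (fun ω hω => by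
                simp only [Set.mem_setOf_eq] at hω; rw [hω])
          _ = μ {ω | N ω = n} * ENNReal.ofReal ((n : ℝ) ^ s) := by
              rw [setLIntegral_const]; ring
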